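/- Equip ℤ^d (d ≥ 1 a fixed integer) with the sup metric dist(x,y) = max over coordinates μ of |x_μ − y_μ|. For a nonempty finite set Y ⊆ ℤ^d let mst(Y) denote the minimum, over all trees τ on Y (simple graphs on Y that are connected and acyclic), of Σ_{{u,v} an edge of τ} dist(u,v). Then there exist real constants a > 0 and b > 0, depending only on d, such that the family (exp(−a·mst(Y)))_Y, indexed by all finite subsets Y of ℤ^d with 0 ∈ Y, is summable and Σ_Y exp(−a·mst(Y)) ≤ b. -/

import Mathlib

open SimpleGraph Real
open scoped ENNReal NNReal


/-- The total length of the edges of a graph `τ` on a vertex type `V`, whose vertices are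
placed in a (pseudo)metric space via `p : V → M`. -/
noncomputable def treeEdgeSum {V M : Type*} [PseudoMetricSpace M]
    (τ : SimpleGraph V) (p : V → M) : ℝ :=
  ∑' e : τ.edgeSet,
    Sym2.lift ⟨fun u v => dist (p u) (p v), fun u v => dist_comm (p u) (p v)⟩ (e : Sym2 V)

/-- `mst(Y)`: the minimum, over all trees `τ` on the finite set `Y ⊆ ℤ^d` (with the sup
distance), of the total edge length of `τ`. -/
noncomputable def mstLen (d : ℕ) (Y : Finset (Fin d → ℤ)) : ℝ :=
  sInf {ℓ : ℝ | ∃ τ : SimpleGraph {m : Fin d → ℤ // m ∈ Y}, τ.IsTree ∧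
    treeEdgeSum τ (fun m => (m : Fin d → ℤ)) = ℓ}

namespace MstAux

/-- consecutive differences of a list in an additive group -/
def diffs {X : Type*} [AddCommGroup X] : List X → List X
  | [] => []
  | [_] => []
  | x :: y :: t => (y - x) :: diffs (y :: t)

@[simp] lemma diffs_nil {X : Type*} [AddCommGroup X] : diffs ([] : List X) = [] := rfl
@[simp] lemma diffs_single {X : Type*} [AddCommGroup X] (x : X) : diffs [x] = [] := rfl
@[simp] lemma diffs_cons_cons {X : Type*} [AddCommGroup X] (x y : X) (t : List X) :
    diffs (x :: y :: t) = (y - x) :: diffs (y :: t) := rfl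

lemma scanl_diffs {X : Type*} [AddCommGroup X] :
    ∀ (t : List X) (x : X), List.scanl (· + ·) x (diffs (x :: t)) = x :: t
  | [], x => by simp
  | y :: t, x => by
    rw [diffs_cons_cons, List.scanl_cons]
    have hxy : x + (y - x) = y := by abel
    rw [hxy, scanl_diffs t y]

/-- lift a walk avoiding `v` to the subgraph induced on the complement of `v` -/
lemma lift_walk {V : Type*} {τ : SimpleGraph V} {v : V} :
    ∀ {x y : V} (p : τ.Walk x y) (hx : x ≠ v) (hy : y ≠ v), v ∉ p.support →
    (τ.comap (Subtype.val : {z : V // z ≠ v} → V)).Reachable ⟨x, hx⟩ ⟨y, hy⟩ := by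
  intro x y p
  induction p with
  | nil => intro hx hy _; exact Reachable.refl _
  | @cons a b y h q IH =>
    intro hx hy hs
    rw [Walk.support_cons, List.mem_cons] at hs
    push_neg at hs
    have hb : b ≠ v := fun hbv => hs.2 (hbv ▸ q.start_mem_support)
    have : (τ.comap (Subtype.val : {z : V // z ≠ v} → V)).Adj ⟨a, hx⟩ ⟨b, hb⟩ := h
    exact this.reachable.trans (IH hb hy hs.2)


/-- Every tree on a finite vertex type has a closed walk from any root which visits every
vertex and uses every edge at most twice. -/
lemma euler_aux :
    ∀ (n : ℕ) (V : Type) [Fintype V] [DecidableEq V], Fintype.card V ≤ n →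
    ∀ (τ : SimpleGraph V), τ.IsTree → ∀ r : V,
    ∃ w : τ.Walk r r, (∀ v : V, v ∈ w.support) ∧ ∀ e : Sym2 V, w.edges.count e ≤ 2 := by
  intro n
  induction n with
  | zero =>
    intro V _ _ hcard τ ht r
    have : 0 < Fintype.card V := Fintype.card_pos_iff.mpr ⟨r⟩
    omega
  | succ n IH =>
    intro V _ _ hcard τ ht r
    by_cases hsub : ∀ v : V, v = r
    · refine ⟨Walk.nil, fun v => by rw [hsub v]; simp, fun e => by simp⟩
    push_neg at hsub
    obtain ⟨v0, hv0⟩ := hsub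
    have hcard2 : 2 ≤ Fintype.card V := Fintype.one_lt_card_iff_nontrivial.mpr ⟨v0, r, hv0⟩
    haveI : DecidableRel τ.Adj := Classical.decRel _
    -- every vertex has positive degree
    have hdegpos : ∀ v : V, 0 < τ.degree v := by
      intro v
      obtain ⟨u, hu⟩ := Fintype.exists_ne_of_one_lt_card hcard2 v
      obtain ⟨p⟩ := ht.isConnected.preconnected v u
      cases p with
      | nil => exact absurd rfl hu
      | cons h q => exact (τ.degree_pos_iff_exists_adj v).mpr ⟨_, h⟩
    -- there is a leaf different from the root
    have hleaf : ∃ v : V, v ≠ r ∧ τ.degree v = 1 := by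
      by_contra hno
      push_neg at hno
      have h2 : ∀ v ∈ Finset.univ.erase r, 2 ≤ τ.degree v := by
        intro v hv
        have hne := Finset.ne_of_mem_erase hv
        have h1 := hdegpos v
        have h2 := hno v hne
        omega
      have hsum := τ.sum_degrees_eq_twice_card_edges
      have hcardE : τ.edgeFinset.card + 1 = Fintype.card V := ht.card_edgeFinset
      have hsplit : τ.degree r + ∑ v ∈ Finset.univ.erase r, τ.degree v = ∑ v, τ.degree v :=
        Finset.add_sum_erase Finset.univ (fun v => τ.degree v) (Finset.mem_univ r)
      have hge : (Finset.univ.erase r).card • 2 ≤ ∑ v ∈ Finset.univ.erase r, τ.degree v :=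
        Finset.card_nsmul_le_sum _ _ _ h2
      have hcarde : (Finset.univ.erase r).card = Fintype.card V - 1 := by
        rw [Finset.card_erase_of_mem (Finset.mem_univ r), Finset.card_univ]
      have hr1 := hdegpos r
      rw [hcarde] at hge
      rw [hsum] at hsplit
      simp only [smul_eq_mul] at hge
      omega
    obtain ⟨v, hvr, hdeg⟩ := hleaf
    obtain ⟨u, hu⟩ := Finset.card_eq_one.mp (by rw [τ.card_neighborFinset_eq_degree, hdeg])
    have hadj : τ.Adj v u := by
      have : u ∈ τ.neighborFinset v := by rw [hu]; exact Finset.mem_singleton_self u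
      exact (SimpleGraph.mem_neighborFinset _ _ _).mp this
    have hneighbor : ∀ y : V, τ.Adj v y → y = u := by
      intro y hy
      have : y ∈ τ.neighborFinset v := (SimpleGraph.mem_neighborFinset _ _ _).mpr hy
      rw [hu] at this
      exact Finset.mem_singleton.mp this
    -- the induced graph on the complement of the leaf
    let τ' : SimpleGraph {z : V // z ≠ v} := τ.comap Subtype.val
    have hr' : r ≠ v := Ne.symm hvr
    let f : τ' →g τ := ⟨Subtype.val, fun h => h⟩
    have htree' : τ'.IsTree := by
      constructor
      · -- connected
        have key : ∀ (x : V) (hx : x ≠ v), τ'.Reachable ⟨x, hx⟩ ⟨r, hr'⟩ := by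
          intro x hx
          obtain ⟨p0⟩ := ht.isConnected.preconnected x r
          have hpath : p0.bypass.IsPath := p0.bypass_isPath
          set p := p0.bypass with hp
          have hvs : v ∉ p.support := by
            intro hmem
            have hspec := p.take_spec hmem
            have hnodup := hpath.support_nodup
            rw [← hspec, Walk.support_append, List.nodup_append] at hnodup
            set p1 := p.takeUntil v hmem with hp1
            set p2 := p.dropUntil v hmem with hp2
            -- neighbor from p1 side
            obtain ⟨b1, h1, q1, hq1⟩ :=
              Walk.not_nil_iff.mp (Walk.not_nil_of_ne (Ne.symm hx) (p := p1.reverse))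
            have hb1u : b1 = u := hneighbor b1 h1
            have hb1mem : b1 ∈ p1.support := by
              have : b1 ∈ p1.reverse.support := by
                rw [hq1, Walk.support_cons]
                exact List.mem_cons_of_mem _ q1.start_mem_support
              rwa [Walk.support_reverse, List.mem_reverse] at this
            -- neighbor from p2 side
            obtain ⟨b2, h2, q2, hq2⟩ :=
              Walk.not_nil_iff.mp (Walk.not_nil_of_ne hvr (p := p2))
            have hb2u : b2 = u := hneighbor b2 h2
            have hb2mem : b2 ∈ p2.support.tail := by
              rw [hq2, Walk.support_cons]
              exact q2.start_mem_support
            rw [hb1u] at hb1mem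
            rw [hb2u] at hb2mem
            exact hnodup.2.2 u hb1mem u hb2mem rfl
          exact MstAux.lift_walk p hx hr' hvs
        haveI : Nonempty {z : V // z ≠ v} := ⟨⟨r, hr'⟩⟩
        exact ⟨fun a b => (key a.1 a.2).trans (key b.1 b.2).symm⟩
      · -- acyclic
        intro a c hc
        exact ht.IsAcyclic (c.map f) (hc.map Subtype.val_injective)
    have hcard' : Fintype.card {z : V // z ≠ v} ≤ n := by
      have h1 : Fintype.card {z : V // z = v} = 1 := Fintype.card_subtype_eq v
      have h2 : Fintype.card {z : V // ¬ z = v} = Fintype.card V - Fintype.card {z : V // z = v} :=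
        Fintype.card_subtype_compl _
      have h3 : Fintype.card {z : V // ¬ z = v} = Fintype.card {z : V // z ≠ v} :=
        Fintype.card_congr (Equiv.subtypeEquivRight fun _ => Iff.rfl)
      omega
    obtain ⟨w', hcov', hcount'⟩ := IH {z : V // z ≠ v} hcard' τ' htree' ⟨r, hr'⟩
    -- map the walk into τ
    let w1 : τ.Walk r r := w'.map f
    have hvn1 : v ∉ w1.support := by
      show v ∉ (w'.map f).support
      rw [Walk.support_map]
      intro hmem
      obtain ⟨x, -, hxe⟩ := List.mem_map.mp hmem
      exact x.2 hxe
    have hcov1 : ∀ x : V, x ≠ v → x ∈ w1.support := by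
      intro x hx
      show x ∈ (w'.map f).support
      rw [Walk.support_map]
      exact List.mem_map_of_mem (hcov' ⟨x, hx⟩)
    have hcnt1 : ∀ e : Sym2 V, w1.edges.count e ≤ 2 := by
      intro e
      show ((w'.map f).edges).count e ≤ 2
      rw [Walk.edges_map]
      by_cases he : ∃ e', Sym2.map f e' = e
      · obtain ⟨e', rfl⟩ := he
        have hfinj : Function.Injective (⇑f) := Subtype.val_injective
        rw [List.count_map_of_injective _ _ (Sym2.map.injective hfinj)]
        exact hcount' e'
      · rw [List.count_eq_zero.mpr]
        · omega
        · intro hmem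
          obtain ⟨e', -, hee⟩ := List.mem_map.mp hmem
          exact he ⟨e', hee⟩
    have huv : u ≠ v := fun h => τ.irrefl (h ▸ hadj)
    have hu1 : u ∈ w1.support := hcov1 u huv
    set wa := w1.takeUntil u hu1 with hwa
    set wb := w1.dropUntil u hu1 with hwb
    let wd : τ.Walk u u := Walk.cons hadj.symm (Walk.cons hadj Walk.nil)
    have hwd_edges : wd.edges = [s(u, v), s(v, u)] := rfl
    have hwd_support : wd.support = [u, v, u] := rfl
    refine ⟨wa.append (wd.append wb), ?_, ?_⟩
    · intro x
      by_cases hx : x = v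
      · subst hx
        rw [Walk.mem_support_append_iff]
        right
        rw [Walk.mem_support_append_iff]
        left
        rw [hwd_support]
        simp
      · have hx1 := hcov1 x hx
        rw [← Walk.take_spec w1 hu1, Walk.mem_support_append_iff] at hx1
        rw [Walk.mem_support_append_iff, Walk.mem_support_append_iff]
        tauto
    · intro e
      have hsplit : wa.edges.count e + wb.edges.count e = w1.edges.count e := by
        conv_rhs => rw [← Walk.take_spec w1 hu1]
        rw [Walk.edges_append, List.count_append]
      rw [Walk.edges_append, Walk.edges_append, List.count_append, List.count_append]
      by_cases he : e = s(v, u)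
      · subst he
        have h0 : w1.edges.count s(v, u) = 0 :=
          List.count_eq_zero.mpr (fun hmem => hvn1 (w1.fst_mem_support_of_mem_edges hmem))
        have hd2 : wd.edges.count s(v, u) = 2 := by
          rw [hwd_edges]
          simp [List.count_cons, Sym2.eq_swap]
        omega
      · have hd0 : wd.edges.count e = 0 := by
          rw [hwd_edges]
          refine List.count_eq_zero.mpr ?_
          intro hmem
          rcases List.mem_pair.mp hmem with h | h
          · exact he (h.trans (Sym2.eq_swap))
          · exact he h
        have := hcnt1 e
        omega


/-- every nonempty finite type admits a tree (the star graph). -/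
lemma exists_tree {V : Type*} (a : V) : ∃ τ : SimpleGraph V, τ.IsTree := by
  classical
  let SG : SimpleGraph V :=
    { Adj := fun x y => x ≠ y ∧ (x = a ∨ y = a)
      symm := by
        constructor
        rintro x y ⟨h1, h2⟩
        exact ⟨h1.symm, h2.symm⟩
      loopless := by
        constructor
        rintro x ⟨h, -⟩
        exact h rfl }
  refine ⟨SG, ?_, ?_⟩
  · -- connected
    have hre : ∀ x : V, SG.Reachable x a := by
      intro x
      by_cases hx : x = a
      · subst hx; exact Reachable.refl _
      · exact (show SG.Adj x a from ⟨hx, Or.inr rfl⟩).reachable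
    haveI : Nonempty V := ⟨a⟩
    exact ⟨fun x y => (hre x).trans (hre y).symm⟩
  · -- acyclic
    intro z c hc
    have h3 := hc.three_le_length
    have hnodup := hc.edges_nodup
    cases c with
    | nil => simp at h3
    | @cons _ w1 _ h1 q =>
      cases q with
      | nil => simp at h3
      | @cons _ w2 _ h2 q2 =>
        cases q2 with
        | nil => simp [Walk.length_cons] at h3
        | @cons _ w3 _ h3' q3 =>
          rw [Walk.edges_cons, Walk.edges_cons, Walk.edges_cons, List.nodup_cons,
            List.nodup_cons] at hnodup
          obtain ⟨hne1, hne2, -⟩ := hnodup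
          rcases h2.2 with hw1 | hw2
          · rcases h3'.2 with hw2' | hw3
            · exact (h2.1 (hw1.trans hw2'.symm)).elim
            · have he : s(w1, w2) = s(w2, w3) := by rw [hw1, hw3]; exact Sym2.eq_swap
              exact hne2 (by rw [he]; exact List.mem_cons_self)
          · rcases h1.2 with hz | hw1
            · have he : s(z, w1) = s(w1, w2) := by rw [hz, hw2]; exact Sym2.eq_swap
              exact hne1 (by rw [he]; exact List.mem_cons_self)
            · exact (h2.1 (hw1.trans hw2.symm)).elim

def elen {V M : Type*} [PseudoMetricSpace M] (p : V → M) : Sym2 V → ℝ :=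
  Sym2.lift ⟨fun u v => dist (p u) (p v), fun u v => dist_comm (p u) (p v)⟩

lemma elen_nonneg {V M : Type*} [PseudoMetricSpace M] (p : V → M) (e : Sym2 V) :
    0 ≤ elen p e := by
  induction e using Sym2.ind with
  | _ u v => simpa [elen] using dist_nonneg

lemma treeEdgeSum_eq_sum {V M : Type*} [PseudoMetricSpace M] [Fintype V] [DecidableEq V]
    (τ : SimpleGraph V) [Fintype τ.edgeSet] (p : V → M) :
    treeEdgeSum τ p = ∑ e ∈ τ.edgeFinset, elen p e := by
  have h1 : treeEdgeSum τ p = ∑' e : τ.edgeSet, elen p (e : Sym2 V) := rfl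
  rw [h1, tsum_fintype, ← Finset.sum_coe_sort τ.edgeFinset (elen p)]
  exact Fintype.sum_equiv
    (Equiv.subtypeEquivRight (fun e => (SimpleGraph.mem_edgeFinset).symm)) _ _ (fun e => rfl)

lemma walk_edges_sum_le {V M : Type*} [PseudoMetricSpace M] [Fintype V] [DecidableEq V]
    (τ : SimpleGraph V) [Fintype τ.edgeSet] (p : V → M) {x y : V} (w : τ.Walk x y)
    (hcnt : ∀ e : Sym2 V, w.edges.count e ≤ 2) :
    (w.edges.map (elen p)).sum ≤ 2 * treeEdgeSum τ p := by
  rw [treeEdgeSum_eq_sum τ p, Finset.sum_list_map_count]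
  have hsub : w.edges.toFinset ⊆ τ.edgeFinset := by
    intro e he
    rw [List.mem_toFinset] at he
    exact (SimpleGraph.mem_edgeFinset).mpr (w.edges_subset_edgeSet he)
  calc ∑ e ∈ w.edges.toFinset, (w.edges.count e) • elen p e
      ≤ ∑ e ∈ w.edges.toFinset, 2 * elen p e := by
        apply Finset.sum_le_sum
        intro e he
        rw [nsmul_eq_mul]
        apply mul_le_mul_of_nonneg_right _ (elen_nonneg p e)
        exact_mod_cast hcnt e
    _ = 2 * ∑ e ∈ w.edges.toFinset, elen p e := by rw [Finset.mul_sum]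
    _ ≤ 2 * ∑ e ∈ τ.edgeFinset, elen p e := by
        apply mul_le_mul_of_nonneg_left _ (by norm_num)
        exact Finset.sum_le_sum_of_subset_of_nonneg hsub (fun e _ _ => elen_nonneg p e)

lemma walk_diffs {V : Type*} {X : Type*} [NormedAddCommGroup X] {τ : SimpleGraph V}
    (p : V → X) (hp : Function.Injective p) :
    ∀ {x y : V} (w : τ.Walk x y),
      (∀ z ∈ diffs (w.support.map p), z ≠ 0) ∧
      ((diffs (w.support.map p)).map (fun z => ‖z‖)).sum = (w.edges.map (elen p)).sum := by
  intro x y w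
  induction w with
  | nil => simp
  | @cons a b y h q IH =>
    obtain ⟨t, ht⟩ : ∃ t, q.support = b :: t := ⟨q.support.tail, q.support_eq_cons⟩
    rw [Walk.support_cons, List.map_cons, ht, List.map_cons, diffs_cons_cons, ← List.map_cons,
      ← ht]
    constructor
    · intro z hz
      rcases List.mem_cons.mp hz with hz | hz
      · rw [hz]
        exact sub_ne_zero.mpr (fun hba => h.ne (hp hba).symm)
      · exact IH.1 z hz
    · rw [List.map_cons, List.sum_cons, Walk.edges_cons, List.map_cons, List.sum_cons, IH.2]
      congr 1
      show ‖p b - p a‖ = elen p s(a, b)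
      have : elen p s(a, b) = dist (p a) (p b) := by simp [elen]
      rw [this, dist_eq_norm, norm_sub_rev]

lemma mst_exists (d : ℕ) (Y : Finset (Fin d → ℤ)) (h0 : (0 : Fin d → ℤ) ∈ Y) :
    ∃ τ : SimpleGraph {m : Fin d → ℤ // m ∈ Y}, τ.IsTree ∧
      treeEdgeSum τ (fun m => (m : Fin d → ℤ)) = mstLen d Y := by
  classical
  set S : Set ℝ := {ℓ : ℝ | ∃ τ : SimpleGraph {m : Fin d → ℤ // m ∈ Y}, τ.IsTree ∧
    treeEdgeSum τ (fun m => (m : Fin d → ℤ)) = ℓ} with hS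
  have hne : S.Nonempty := by
    obtain ⟨τ, hτ⟩ := exists_tree (⟨0, h0⟩ : {m : Fin d → ℤ // m ∈ Y})
    exact ⟨_, τ, hτ, rfl⟩
  have hfin : S.Finite := by
    have hsub : S ⊆ Set.range (fun τ : SimpleGraph {m : Fin d → ℤ // m ∈ Y} =>
        treeEdgeSum τ (fun m => (m : Fin d → ℤ))) := by
      rintro ℓ ⟨τ, -, hτ⟩
      exact ⟨τ, hτ⟩
    exact (Set.finite_range _).subset hsub
  have hmem : sInf S ∈ S := hne.csInf_mem hfin
  have hm : mstLen d Y = sInf S := rfl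
  obtain ⟨τ, h1, h2⟩ := hmem
  exact ⟨τ, h1, by rw [h2, hm]⟩

lemma main_enc (d : ℕ) (Y : Finset (Fin d → ℤ)) (h0 : (0 : Fin d → ℤ) ∈ Y) :
    ∃ s : List (Fin d → ℤ), (∀ z ∈ s, z ≠ 0) ∧
      (s.scanl (· + ·) (0 : Fin d → ℤ)).toFinset = Y ∧
      (s.map (fun z => ‖z‖)).sum ≤ 2 * mstLen d Y := by
  classical
  obtain ⟨τ, htree, hτsum⟩ := mst_exists d Y h0
  haveI : DecidableRel τ.Adj := Classical.decRel _
  obtain ⟨w, hcov, hcnt⟩ :=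
    euler_aux (Fintype.card {m : Fin d → ℤ // m ∈ Y}) _ le_rfl τ htree ⟨0, h0⟩
  set p : {m : Fin d → ℤ // m ∈ Y} → (Fin d → ℤ) := fun m => (m : Fin d → ℤ) with hpdef
  refine ⟨diffs (w.support.map p), (walk_diffs p Subtype.val_injective w).1, ?_, ?_⟩
  · obtain ⟨t, ht⟩ : ∃ t, w.support = ⟨0, h0⟩ :: t := ⟨w.support.tail, w.support_eq_cons⟩
    have hmap : w.support.map p = (0 : Fin d → ℤ) :: t.map p := by rw [ht]; rfl
    rw [hmap, scanl_diffs]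
    ext z
    rw [List.mem_toFinset, ← hmap]
    constructor
    · intro hz
      obtain ⟨m, -, rfl⟩ := List.mem_map.mp hz
      exact m.2
    · intro hz
      exact List.mem_map_of_mem (f := p) (hcov ⟨z, hz⟩)
  · rw [(walk_diffs p Subtype.val_injective w).2, ← hτsum]
    exact walk_edges_sum_le τ p w hcnt

lemma tsum_pi_prod {α : Type*} (w : α → ℝ≥0∞) :
    ∀ n : ℕ, ∑' f : Fin n → α, ∏ i, w (f i) = (∑' x, w x) ^ n
  | 0 => by
    haveI : Unique (Fin 0 → α) := ⟨⟨fun i => i.elim0⟩, fun f => funext fun i => i.elim0⟩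
    rw [tsum_eq_single (default : Fin 0 → α) (fun b hb => absurd (Subsingleton.elim b default) hb)]
    simp
  | n + 1 => by
    rw [← (Fin.consEquiv (fun _ : Fin (n + 1) => α)).tsum_eq (fun f => ∏ i, w (f i)),
      ENNReal.tsum_prod']
    have hin : ∀ (x : α) (g : Fin n → α),
        (∏ i, w (((Fin.consEquiv (fun _ : Fin (n + 1) => α)) (x, g)) i)) = w x * ∏ i, w (g i) := by
      intro x g
      rw [Fin.prod_univ_succ]
      simp [Fin.consEquiv]
    calc ∑' x, ∑' g : Fin n → α, ∏ i, w (((Fin.consEquiv (fun _ : Fin (n + 1) => α)) (x, g)) i)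
        = ∑' x, ∑' g : Fin n → α, w x * ∏ i, w (g i) :=
          tsum_congr fun x => tsum_congr fun g => hin x g
      _ = ∑' x, w x * ∑' g : Fin n → α, ∏ i, w (g i) :=
          tsum_congr fun x => ENNReal.tsum_mul_left
      _ = (∑' x, w x) * ∑' g : Fin n → α, ∏ i, w (g i) := ENNReal.tsum_mul_right
      _ = (∑' x, w x) ^ (n + 1) := by rw [tsum_pi_prod w n, ← pow_succ']

lemma tsum_list_prod {α : Type*} (w : α → ℝ≥0∞) :
    ∑' L : List α, (L.map w).prod = ∑' n : ℕ, (∑' x, w x) ^ n := by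
  rw [← ((List.equivSigmaTuple (α := α)).symm).tsum_eq (fun L => (L.map w).prod),
    ENNReal.tsum_sigma']
  refine tsum_congr fun n => ?_
  rw [← tsum_pi_prod w n]
  refine tsum_congr fun f => ?_
  have h1 : ((List.equivSigmaTuple (α := α)).symm ⟨n, f⟩ : List α) = List.ofFn f := rfl
  rw [h1, List.map_ofFn, List.prod_ofFn]
  rfl

lemma ofReal_exp_list {X : Type*} [NormedAddCommGroup X] (c : ℝ) :
    ∀ l : List X, ENNReal.ofReal (Real.exp (-c * (l.map (fun z => ‖z‖)).sum)) =
      (l.map (fun z => ENNReal.ofReal (Real.exp (-c * ‖z‖)))).prod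
  | [] => by simp
  | x :: l => by
    have harg : -c * (‖x‖ + (l.map (fun z => ‖z‖)).sum) =
        (-c * ‖x‖) + (-c * (l.map (fun z => ‖z‖)).sum) := by ring
    rw [List.map_cons, List.sum_cons, harg, Real.exp_add,
      ENNReal.ofReal_mul (Real.exp_nonneg _), List.map_cons, List.prod_cons,
      ofReal_exp_list c l]

end MstAux

/-- Summability of `exp(−a·mst(Y))` over all finite subsets `Y ⊆ ℤ^d`
containing `0` (part (1) of Lemma E.2 of the paper): there are constants `a, b > 0`
depending only on `d` such that `Σ_{Y ∋ 0} exp(−a·mst(Y)) ≤ b`. -/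
theorem mst_polymer_sum (d : ℕ) (hd : 1 ≤ d) :
    ∃ a : ℝ, 0 < a ∧ ∃ b : ℝ, 0 < b ∧
      Summable (fun Y : {Y : Finset (Fin d → ℤ) // (0 : Fin d → ℤ) ∈ Y} =>
        Real.exp (-a * mstLen d Y.1)) ∧
      ∑' Y : {Y : Finset (Fin d → ℤ) // (0 : Fin d → ℤ) ∈ Y},
        Real.exp (-a * mstLen d Y.1) ≤ b := by
  classical
  have hd0 : (0:ℝ) < (d:ℝ) := by exact_mod_cast Nat.lt_of_lt_of_le Nat.zero_lt_one hd
  set A := {z : Fin d → ℤ // z ≠ 0} with hA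
  have hi0 : 0 < d := hd
  let a0 : A := ⟨fun _ => 1, fun hcon => by
    have := congrFun hcon ⟨0, hi0⟩
    simp at this⟩
  let toA : (Fin d → ℤ) → A := fun z => if h : z = 0 then a0 else ⟨z, h⟩
  have toA_val : ∀ z : Fin d → ℤ, z ≠ 0 → ((toA z) : Fin d → ℤ) = z := by
    intro z hz
    simp only [toA, dif_neg hz]
  -- choose encodings
  choose s hs0 hsY hslen using fun (Y : {Y : Finset (Fin d → ℤ) // (0 : Fin d → ℤ) ∈ Y}) =>
    MstAux.main_enc d Y.1 Y.2
  set enc : {Y : Finset (Fin d → ℤ) // (0 : Fin d → ℤ) ∈ Y} → List A :=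
    fun Y => (s Y).map toA with henc
  have henc_val : ∀ Y, (enc Y).map (Subtype.val) = s Y := by
    intro Y
    rw [henc]
    rw [List.map_map]
    have h := fun z hz => toA_val z (hs0 Y z hz)
    calc (s Y).map (Subtype.val ∘ toA) = (s Y).map id := List.map_congr_left h
      _ = s Y := List.map_id _
  have henc_inj : Function.Injective enc := by
    intro Y1 Y2 h
    have hs12 : s Y1 = s Y2 := by rw [← henc_val Y1, ← henc_val Y2, h]
    have hh := hsY Y1
    rw [hs12, hsY Y2] at hh
    exact Subtype.ext hh.symm
  -- weights
  set w0 : A → ℝ≥0∞ := fun z => ENNReal.ofReal (Real.exp (-(4 * d : ℝ) * ‖(z : Fin d → ℤ)‖))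
    with hw0
  set G : {Y : Finset (Fin d → ℤ) // (0 : Fin d → ℤ) ∈ Y} → ℝ≥0∞ :=
    fun Y => ENNReal.ofReal (Real.exp (-(8 * d : ℝ) * mstLen d Y.1)) with hG
  have hpoint : ∀ Y, G Y ≤ ((enc Y).map w0).prod := by
    intro Y
    have hmap : (enc Y).map w0
        = (s Y).map (fun z => ENNReal.ofReal (Real.exp (-(4 * d : ℝ) * ‖z‖))) := by
      rw [henc, List.map_map]
      refine List.map_congr_left ?_
      intro z hz
      show ENNReal.ofReal (Real.exp (-(4 * d : ℝ) * ‖((toA z) : Fin d → ℤ)‖)) = _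
      rw [toA_val z (hs0 Y z hz)]
    rw [hmap, ← MstAux.ofReal_exp_list]
    apply ENNReal.ofReal_le_ofReal
    apply Real.exp_le_exp.mpr
    have hlen := hslen Y
    nlinarith [hslen Y, hd0, mul_le_mul_of_nonneg_left (hslen Y)
      (show (0:ℝ) ≤ 4 * d by positivity)]
  set K : ℝ≥0∞ := ∑' z : A, w0 z with hK
  -- bound every weight coordinatewise
  have hA_le : ∀ z : A, w0 z ≤ ENNReal.ofReal (Real.exp (-(2 * d : ℝ))) *
      ∏ i : Fin d, ENNReal.ofReal (Real.exp (-2 * ‖(z : Fin d → ℤ) i‖)) := by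
    intro z
    have h1 : (1:ℝ) ≤ ‖(z : Fin d → ℤ)‖ := by
      obtain ⟨i, hi⟩ := Function.ne_iff.mp z.2
      have h2 : (1:ℝ) ≤ ‖(z : Fin d → ℤ) i‖ := by
        rw [Int.norm_eq_abs]
        exact_mod_cast Int.one_le_abs hi
      exact le_trans h2 (norm_le_pi_norm _ i)
    have h2 : ∑ i : Fin d, ‖(z : Fin d → ℤ) i‖ ≤ (d:ℝ) * ‖(z : Fin d → ℤ)‖ := by
      calc ∑ i : Fin d, ‖(z : Fin d → ℤ) i‖ ≤ ∑ _i : Fin d, ‖(z : Fin d → ℤ)‖ :=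
          Finset.sum_le_sum fun i _ => norm_le_pi_norm _ i
        _ = (d:ℝ) * ‖(z : Fin d → ℤ)‖ := by
          rw [Finset.sum_const, Finset.card_univ, Fintype.card_fin, nsmul_eq_mul]
    have hexp : -(4 * d : ℝ) * ‖(z : Fin d → ℤ)‖ ≤
        -(2 * d : ℝ) + ∑ i : Fin d, (-2 * ‖(z : Fin d → ℤ) i‖) := by
      have hsum : ∑ i : Fin d, (-2 * ‖(z : Fin d → ℤ) i‖)
          = -2 * ∑ i : Fin d, ‖(z : Fin d → ℤ) i‖ := by
        rw [← Finset.mul_sum]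
      rw [hsum]
      nlinarith [h1, h2, hd0]
    calc w0 z ≤ ENNReal.ofReal (Real.exp (-(2 * d : ℝ) +
          ∑ i : Fin d, (-2 * ‖(z : Fin d → ℤ) i‖))) :=
        ENNReal.ofReal_le_ofReal (Real.exp_le_exp.mpr hexp)
      _ = _ := by
        rw [Real.exp_add, Real.exp_sum, ENNReal.ofReal_mul (Real.exp_nonneg _),
          ENNReal.ofReal_prod_of_nonneg (fun i _ => Real.exp_nonneg _)]
  have hKle1 : K ≤ ENNReal.ofReal (Real.exp (-(2 * d : ℝ))) *
      ∑' z : Fin d → ℤ, ∏ i : Fin d, ENNReal.ofReal (Real.exp (-2 * ‖z i‖)) := by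
    calc K ≤ ∑' z : A, ENNReal.ofReal (Real.exp (-(2 * d : ℝ))) *
        ∏ i : Fin d, ENNReal.ofReal (Real.exp (-2 * ‖(z : Fin d → ℤ) i‖)) :=
        ENNReal.tsum_le_tsum hA_le
      _ = ENNReal.ofReal (Real.exp (-(2 * d : ℝ))) *
        ∑' z : A, ∏ i : Fin d, ENNReal.ofReal (Real.exp (-2 * ‖(z : Fin d → ℤ) i‖)) :=
        ENNReal.tsum_mul_left
      _ ≤ _ := mul_le_mul_right
        (ENNReal.tsum_comp_le_tsum_of_injective Subtype.val_injective
          (fun z : Fin d → ℤ => ∏ i : Fin d, ENNReal.ofReal (Real.exp (-2 * ‖z i‖)))) _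
  have hpi : ∑' z : Fin d → ℤ, ∏ i : Fin d, ENNReal.ofReal (Real.exp (-2 * ‖z i‖)) =
      (∑' m : ℤ, ENNReal.ofReal (Real.exp (-2 * ‖m‖))) ^ d :=
    MstAux.tsum_pi_prod (fun m : ℤ => ENNReal.ofReal (Real.exp (-2 * ‖m‖))) d
  set g : ℤ → ℝ≥0∞ := fun m => ENNReal.ofReal (Real.exp (-2 * ‖m‖)) with hg
  set q : ℝ≥0∞ := ENNReal.ofReal (Real.exp (-2)) with hq
  have hg_nat : ∀ n : ℕ, g ((n : ℤ)) = q ^ n := by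
    intro n
    simp only [hg, hq]
    rw [← ENNReal.ofReal_pow (Real.exp_nonneg _), ← Real.exp_nat_mul]
    congr 1
    rw [Int.norm_eq_abs]
    push_cast
    rw [abs_of_nonneg (by positivity : (0:ℝ) ≤ (n:ℝ))]
    ring
  have hg_neg : ∀ n : ℕ, g (-((n : ℤ) + 1)) = q ^ (n + 1) := by
    intro n
    simp only [hg, hq]
    rw [← ENNReal.ofReal_pow (Real.exp_nonneg _), ← Real.exp_nat_mul]
    congr 1
    rw [norm_neg, Int.norm_eq_abs]
    push_cast
    rw [abs_of_nonneg (by positivity : (0:ℝ) ≤ (n:ℝ) + 1)]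
    ring
  have hq1 : q ≤ 1 := by
    rw [hq, ← ENNReal.ofReal_one]
    apply ENNReal.ofReal_le_ofReal
    calc Real.exp (-2) ≤ Real.exp 0 := Real.exp_le_exp.mpr (by norm_num)
      _ = 1 := Real.exp_zero
  have hsplit : (∑' m : ℤ, g m) = (∑' n : ℕ, g ((n : ℤ))) + ∑' n : ℕ, g (-((n : ℤ) + 1)) :=
    (HasSum.of_nat_of_neg_add_one ENNReal.summable.hasSum ENNReal.summable.hasSum).tsum_eq
  have hgeo_nat : (∑' n : ℕ, g ((n : ℤ))) = (1 - q)⁻¹ := by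
    calc (∑' n : ℕ, g ((n : ℤ))) = ∑' n : ℕ, q ^ n := tsum_congr hg_nat
      _ = (1 - q)⁻¹ := ENNReal.tsum_geometric q
  have hgeo_neg : (∑' n : ℕ, g (-((n : ℤ) + 1))) ≤ (1 - q)⁻¹ := by
    calc (∑' n : ℕ, g (-((n : ℤ) + 1))) = ∑' n : ℕ, q ^ (n + 1) := tsum_congr hg_neg
      _ ≤ ∑' n : ℕ, q ^ n := ENNReal.tsum_le_tsum (fun n => by
          rw [pow_succ']
          exact mul_le_of_le_one_left' hq1)
      _ = (1 - q)⁻¹ := ENNReal.tsum_geometric q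
  have hZ : (∑' m : ℤ, g m) ≤ 2 * (1 - q)⁻¹ := by
    rw [hsplit, hgeo_nat, two_mul]
    exact add_le_add_right hgeo_neg _
  -- numerics
  have hexp2 : (7:ℝ) ≤ Real.exp 2 := by
    have h1 := Real.exp_one_gt_d9
    have h2 : Real.exp 2 = Real.exp 1 * Real.exp 1 := by
      rw [← Real.exp_add]; norm_num
    nlinarith
  have hx7 : Real.exp (-2) ≤ 1/7 := by
    rw [Real.exp_neg, one_div]
    exact inv_anti₀ (by norm_num) hexp2
  have hx0 : (0:ℝ) < Real.exp (-2) := Real.exp_pos _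
  have h1x : (0:ℝ) < 1 - Real.exp (-2) := by nlinarith
  have hqinv : (1 - q)⁻¹ = ENNReal.ofReal ((1 - Real.exp (-2))⁻¹) := by
    rw [hq, ← ENNReal.ofReal_one, ← ENNReal.ofReal_sub _ (Real.exp_nonneg _),
      ← ENNReal.ofReal_inv_of_pos h1x]
  have hZ2 : (∑' m : ℤ, g m) ≤ ENNReal.ofReal (2 * (1 - Real.exp (-2))⁻¹) := by
    calc (∑' m : ℤ, g m) ≤ 2 * (1 - q)⁻¹ := hZ
      _ = ENNReal.ofReal (2 * (1 - Real.exp (-2))⁻¹) := by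
        rw [hqinv, ENNReal.ofReal_mul (by norm_num : (0:ℝ) ≤ 2), ENNReal.ofReal_ofNat]
  -- real-number bound
  have hreal : Real.exp (-(2 * d : ℝ)) * (2 * (1 - Real.exp (-2))⁻¹) ^ d ≤ 1/2 := by
    have hxd : Real.exp (-(2 * d : ℝ)) = Real.exp (-2) ^ d := by
      rw [← Real.exp_nat_mul]
      congr 1
      ring
    rw [hxd, ← mul_pow]
    have hρ : Real.exp (-2) * (2 * (1 - Real.exp (-2))⁻¹) ≤ 1/2 := by
      have hrw : Real.exp (-2) * (2 * (1 - Real.exp (-2))⁻¹)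
          = (2 * Real.exp (-2)) / (1 - Real.exp (-2)) := by
        field_simp
      rw [hrw, div_le_div_iff₀ h1x (by norm_num : (0:ℝ) < 2)]
      linarith
    have hρ0 : (0:ℝ) ≤ Real.exp (-2) * (2 * (1 - Real.exp (-2))⁻¹) := by positivity
    calc (Real.exp (-2) * (2 * (1 - Real.exp (-2))⁻¹)) ^ d ≤ (1/2 : ℝ) ^ d :=
        pow_le_pow_left₀ hρ0 hρ d
      _ ≤ (1/2 : ℝ) ^ 1 := pow_le_pow_of_le_one (by norm_num) (by norm_num) hd
      _ = 1/2 := pow_one _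
  have hKfinal : K ≤ 2⁻¹ := by
    calc K ≤ _ := hKle1
      _ = ENNReal.ofReal (Real.exp (-(2 * d : ℝ))) * (∑' m : ℤ, g m) ^ d := by rw [hpi]
      _ ≤ ENNReal.ofReal (Real.exp (-(2 * d : ℝ))) *
          (ENNReal.ofReal (2 * (1 - Real.exp (-2))⁻¹)) ^ d :=
        mul_le_mul_right (pow_le_pow_left' hZ2 d) _
      _ = ENNReal.ofReal (Real.exp (-(2 * d : ℝ)) * (2 * (1 - Real.exp (-2))⁻¹) ^ d) := by
        rw [← ENNReal.ofReal_pow (by positivity), ← ENNReal.ofReal_mul (Real.exp_nonneg _)]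
      _ ≤ ENNReal.ofReal (1/2 : ℝ) := ENNReal.ofReal_le_ofReal hreal
      _ = 2⁻¹ := by
        rw [one_div, ENNReal.ofReal_inv_of_pos (by norm_num : (0:ℝ) < 2),
          ENNReal.ofReal_ofNat]
  have hgeom : (∑' n : ℕ, K ^ n) ≤ 2 := by
    calc (∑' n : ℕ, K ^ n) ≤ ∑' n : ℕ, (2⁻¹ : ℝ≥0∞) ^ n :=
        ENNReal.tsum_le_tsum (fun n => pow_le_pow_left' hKfinal n)
      _ = (1 - 2⁻¹)⁻¹ := ENNReal.tsum_geometric _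
      _ = 2 := by rw [ENNReal.one_sub_inv_two, inv_inv]
  have hfinal : (∑' Y, G Y) ≤ 2 := by
    calc (∑' Y, G Y) ≤ ∑' Y, ((enc Y).map w0).prod := ENNReal.tsum_le_tsum hpoint
      _ ≤ ∑' L : List A, (L.map w0).prod :=
        ENNReal.tsum_comp_le_tsum_of_injective henc_inj _
      _ = ∑' n : ℕ, K ^ n := MstAux.tsum_list_prod w0
      _ ≤ 2 := hgeom
  have hne_top : (∑' Y, G Y) ≠ ⊤ :=
    ne_top_of_le_ne_top (by simp) hfinal
  have hfun : (fun Y : {Y : Finset (Fin d → ℤ) // (0 : Fin d → ℤ) ∈ Y} => (G Y).toReal)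
      = fun Y => Real.exp (-(8 * (d:ℝ)) * mstLen d Y.1) := by
    funext Y
    rw [hG]
    exact ENNReal.toReal_ofReal (Real.exp_nonneg _)
  refine ⟨8 * d, by positivity, 2, by norm_num, ?_, ?_⟩
  · have hsummable := ENNReal.summable_toReal hne_top
    rwa [hfun] at hsummable
  · have htsum : ∑' Y : {Y : Finset (Fin d → ℤ) // (0 : Fin d → ℤ) ∈ Y},
        Real.exp (-(8 * (d:ℝ)) * mstLen d Y.1) = (∑' Y, G Y).toReal := by
      rw [ENNReal.tsum_toReal_eq (fun Y => ENNReal.ofReal_ne_top), hfun]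
    rw [htsum]
    calc (∑' Y, G Y).toReal ≤ (2 : ℝ≥0∞).toReal :=
        ENNReal.toReal_mono (by simp) hfinal
      _ = 2 := by simp
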